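/- Let S(x,y) = Σ_{s∈S} a_s x^{π₁(s)} y^{π₂(s)} be the inventory of a two-dimensional model with central weighting a_s = β α₁^{π₁(s)} α₂^{π₂(s)}, and let S₀ be the unweighted inventory. Suppose (x₀,y₀) is the unique positive critical point of S₀ and (x_s,y_s) that of S. Then (x_s, y_s) = (x₀/α₁, y₀/α₂), and the covariance factor c = S_{xy}(x_s,y_s)/√(S_{xx}(x_s,y_s)·S_{yy}(x_s,y_s)) equals the covariance factor computed from S₀ at (x₀,y₀); i.e., c does not depend on the weights β, α₁, α₂. -/

import Mathlib

/-- Unconditional chain rule for scaling the domain by a nonzero constant. -/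
lemma deriv_comp_const_mul_aux (f : ℝ → ℝ) (c x : ℝ) (hc : c ≠ 0) :
    deriv (fun x => f (c * x)) x = c * deriv f (c * x) := by
  by_cases hf : DifferentiableAt ℝ f (c * x)
  · have h := (hf.hasDerivAt.comp x ((hasDerivAt_id x).const_mul c)).deriv
    exact h.trans (by ring)
  · have h2 : ¬ DifferentiableAt ℝ (fun x => f (c * x)) x := by
      intro h
      apply hf
      have h3 : DifferentiableAt ℝ ((fun x => f (c * x)) ∘ (fun u => c⁻¹ * u)) (c * x) := by
        refine DifferentiableAt.comp _ ?_ (differentiableAt_id.const_mul c⁻¹)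
        simpa [inv_mul_cancel_left₀ hc] using h
      have h4 : ((fun x => f (c * x)) ∘ (fun u => c⁻¹ * u)) = f := by
        funext u; simp [Function.comp, mul_inv_cancel_left₀ hc]
      rwa [h4] at h3
    rw [deriv_zero_of_not_differentiableAt h2, deriv_zero_of_not_differentiableAt hf, mul_zero]

/-- For a centrally weighted 2D model, the positive critical point of the weighted
inventory is `(x₀/α₁, y₀/α₂)` where `(x₀,y₀)` is that of the unweighted inventory, and
the covariance factor `c = S_xy/√(S_xx S_yy)` at the critical point is independent of
the weights. -/
theorem covariance_factor_weight_independent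
    (S : Finset (ℤ × ℤ)) (β α₁ α₂ : ℝ) (hβ : 0 < β) (hα₁ : 0 < α₁) (hα₂ : 0 < α₂)
    (S₀ Sw : ℝ → ℝ → ℝ)
    (hS₀ : ∀ x y, S₀ x y = ∑ s ∈ S, x ^ s.1 * y ^ s.2)
    (hSw : ∀ x y, Sw x y = ∑ s ∈ S, (β * α₁ ^ s.1 * α₂ ^ s.2) * x ^ s.1 * y ^ s.2)
    (x₀ y₀ : ℝ) (hx₀ : 0 < x₀) (hy₀ : 0 < y₀)
    (hcrit : deriv (fun x => S₀ x y₀) x₀ = 0 ∧ deriv (fun y => S₀ x₀ y) y₀ = 0)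
    (huniq : ∀ x y : ℝ, 0 < x → 0 < y →
      deriv (fun x' => S₀ x' y) x = 0 → deriv (fun y' => S₀ x y') y = 0 →
      x = x₀ ∧ y = y₀) :
    (deriv (fun x => Sw x (y₀ / α₂)) (x₀ / α₁) = 0 ∧
      deriv (fun y => Sw (x₀ / α₁) y) (y₀ / α₂) = 0) ∧
    (∀ x y : ℝ, 0 < x → 0 < y →
      deriv (fun x' => Sw x' y) x = 0 → deriv (fun y' => Sw x y') y = 0 →
      x = x₀ / α₁ ∧ y = y₀ / α₂) ∧
    (deriv (fun y => deriv (fun x => Sw x y) (x₀ / α₁)) (y₀ / α₂) /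
        Real.sqrt
          (deriv (deriv (fun x => Sw x (y₀ / α₂))) (x₀ / α₁) *
            deriv (deriv (fun y => Sw (x₀ / α₁) y)) (y₀ / α₂)) =
      deriv (fun y => deriv (fun x => S₀ x y) x₀) y₀ /
        Real.sqrt
          (deriv (deriv (fun x => S₀ x y₀)) x₀ *
            deriv (deriv (fun y => S₀ x₀ y)) y₀)) := by
  have hα₁' : α₁ ≠ 0 := ne_of_gt hα₁
  have hα₂' : α₂ ≠ 0 := ne_of_gt hα₂
  have hβ' : β ≠ 0 := ne_of_gt hβ
  -- Relation between the weighted and unweighted inventories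
  have hrel : ∀ x y, Sw x y = β * S₀ (α₁ * x) (α₂ * y) := by
    intro x y
    rw [hSw, hS₀, Finset.mul_sum]
    refine Finset.sum_congr rfl fun s _ => ?_
    rw [mul_zpow, mul_zpow]; ring
  have e1 : α₁ * (x₀ / α₁) = x₀ := by field_simp
  have e2 : α₂ * (y₀ / α₂) = y₀ := by field_simp
  -- first partials
  have hD1 : ∀ x y, deriv (fun x' => Sw x' y) x
      = β * α₁ * deriv (fun u => S₀ u (α₂ * y)) (α₁ * x) := by
    intro x y
    have h : (fun x' => Sw x' y) = fun x' => β * S₀ (α₁ * x') (α₂ * y) := by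
      funext x'; rw [hrel]
    rw [h, deriv_const_mul_field,
      deriv_comp_const_mul_aux (fun u => S₀ u (α₂ * y)) α₁ x hα₁']
    ring
  have hD2 : ∀ x y, deriv (fun y' => Sw x y') y
      = β * α₂ * deriv (fun v => S₀ (α₁ * x) v) (α₂ * y) := by
    intro x y
    have h : (fun y' => Sw x y') = fun y' => β * S₀ (α₁ * x) (α₂ * y') := by
      funext y'; rw [hrel]
    rw [h, deriv_const_mul_field,
      deriv_comp_const_mul_aux (fun v => S₀ (α₁ * x) v) α₂ y hα₂']
    ring
  refine ⟨⟨?_, ?_⟩, ?_, ?_⟩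
  · rw [hD1, e1, e2, hcrit.1, mul_zero]
  · rw [hD2, e1, e2, hcrit.2, mul_zero]
  · intro x y hx hy h1 h2
    rw [hD1] at h1
    rw [hD2] at h2
    have h1' : deriv (fun u => S₀ u (α₂ * y)) (α₁ * x) = 0 := by
      rcases mul_eq_zero.1 h1 with h | h
      · exact absurd h (mul_ne_zero hβ' hα₁')
      · exact h
    have h2' : deriv (fun v => S₀ (α₁ * x) v) (α₂ * y) = 0 := by
      rcases mul_eq_zero.1 h2 with h | h
      · exact absurd h (mul_ne_zero hβ' hα₂')
      · exact h
    obtain ⟨hax, hay⟩ := huniq (α₁ * x) (α₂ * y) (mul_pos hα₁ hx) (mul_pos hα₂ hy) h1' h2'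
    refine ⟨eq_div_of_mul_eq hα₁' ?_, eq_div_of_mul_eq hα₂' ?_⟩
    · rw [mul_comm]; exact hax
    · rw [mul_comm]; exact hay
  · -- second partials
    have hD11 : deriv (deriv (fun x => Sw x (y₀ / α₂))) (x₀ / α₁)
        = β * α₁ ^ 2 * deriv (deriv (fun x => S₀ x y₀)) x₀ := by
      have h : deriv (fun x => Sw x (y₀ / α₂))
          = fun x => β * α₁ * (deriv (fun x => S₀ x y₀)) (α₁ * x) := by
        funext x; rw [hD1, e2]
      rw [h, deriv_const_mul_field,
        deriv_comp_const_mul_aux (deriv (fun x => S₀ x y₀)) α₁ (x₀ / α₁) hα₁', e1]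
      ring
    have hD22 : deriv (deriv (fun y => Sw (x₀ / α₁) y)) (y₀ / α₂)
        = β * α₂ ^ 2 * deriv (deriv (fun y => S₀ x₀ y)) y₀ := by
      have h : deriv (fun y => Sw (x₀ / α₁) y)
          = fun y => β * α₂ * (deriv (fun y => S₀ x₀ y)) (α₂ * y) := by
        funext y; rw [hD2, e1]
      rw [h, deriv_const_mul_field,
        deriv_comp_const_mul_aux (deriv (fun y => S₀ x₀ y)) α₂ (y₀ / α₂) hα₂', e2]
      ring
    have hD12 : deriv (fun y => deriv (fun x => Sw x y) (x₀ / α₁)) (y₀ / α₂)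
        = β * α₁ * α₂ * deriv (fun y => deriv (fun x => S₀ x y) x₀) y₀ := by
      have h : (fun y => deriv (fun x => Sw x y) (x₀ / α₁))
          = fun y => β * α₁ * deriv (fun x => S₀ x (α₂ * y)) x₀ := by
        funext y; rw [hD1, e1]
      rw [h, deriv_const_mul_field,
        deriv_comp_const_mul_aux (fun v => deriv (fun x => S₀ x v) x₀) α₂ (y₀ / α₂) hα₂', e2]
      ring
    rw [hD11, hD22, hD12]
    set M := deriv (fun y => deriv (fun x => S₀ x y) x₀) y₀
    set A := deriv (deriv (fun x => S₀ x y₀)) x₀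
    set B := deriv (deriv (fun y => S₀ x₀ y)) y₀
    have hprod : β * α₁ ^ 2 * A * (β * α₂ ^ 2 * B) = (β * α₁ * α₂) ^ 2 * (A * B) := by ring
    rw [hprod, Real.sqrt_mul (sq_nonneg _),
      Real.sqrt_sq (by positivity : (0:ℝ) ≤ β * α₁ * α₂),
      mul_div_mul_left _ _ (by positivity : β * α₁ * α₂ ≠ 0)]
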